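/- Let B be a nonempty set and f, g : B → ω be (total) functions. For n ∈ ω define the partial functions 𝒰(n) = max{f(b) : b ∈ B, g(b) ≤ n} (defined when this set is nonempty and bounded) and ℒ(n) = min{g(b) : b ∈ B, f(b) ≥ n} (defined when this set is nonempty). Then typ(ℒ) = ρ(typ(𝒰)), where ρ(α) = ε, ρ(β) = δ, ρ(γ) = γ, ρ(δ) = β, ρ(ε) = α. -/
import Mathlib


def domPlus (D : Set ℕ) (g : ℕ → ℕ) : Set ℕ := {n ∈ D | n ≤ g n}

def domMinus (D : Set ℕ) (g : ℕ → ℕ) : Set ℕ := {n ∈ D | g n ≤ n}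

def bddOn (D : Set ℕ) (g : ℕ → ℕ) : Prop := ∃ C, ∀ n ∈ D, g n ≤ C

inductive Typ where
  | A | B | C | D | E
deriving DecidableEq

/-- The five defining conditions of types α, β, γ, δ, ε, for a partial function
represented by its domain `D` and value function `g`. -/
def typIs (D : Set ℕ) (g : ℕ → ℕ) : Typ → Prop
  | .A => D.Infinite ∧ bddOn D g
  | .B => D.Infinite ∧ (domPlus D g).Finite ∧ ¬ bddOn D g
  | .C => (domPlus D g).Infinite ∧ (domMinus D g).Infinite
  | .D => D.Infinite ∧ (domMinus D g).Finite
  | .E => D.Finite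

/-- ρ(α) = ε, ρ(β) = δ, ρ(γ) = γ, ρ(δ) = β, ρ(ε) = α. -/
def rho : Typ → Typ
  | .A => .E
  | .B => .D
  | .C => .C
  | .D => .B
  | .E => .A

/-- Proposition 5 of Moshkov 1996: `typ(ℒ) = ρ(typ(𝒰))`, where
`𝒰(n) = max {f b : g b ≤ n}` (defined when this set is nonempty and bounded)
and `ℒ(n) = min {g b : f b ≥ n}` (defined when this set is nonempty). -/
theorem stmt3 {B : Type*} [Nonempty B] (f g : B → ℕ)
    (domU : Set ℕ) (valU : ℕ → ℕ) (domL : Set ℕ) (valL : ℕ → ℕ)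
    (hdomU : domU = {m | (∃ b, g b ≤ m) ∧ BddAbove {k | ∃ b, g b ≤ m ∧ f b = k}})
    (hvalU : ∀ m ∈ domU, valU m = sSup {k | ∃ b, g b ≤ m ∧ f b = k})
    (hdomL : domL = {m | ∃ b, m ≤ f b})
    (hvalL : ∀ m ∈ domL, valL m = sInf {k | ∃ b, m ≤ f b ∧ g b = k})
    (t : Typ) (ht : typIs domU valU t) :
    typIs domL valL (rho t) := by
  obtain ⟨b0⟩ := ‹Nonempty B›
  have hUmem : ∀ m ∈ domU, ∃ b, g b ≤ m ∧ f b = valU m := by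
    intro m hm
    have hm' := hm
    rw [hdomU] at hm'
    obtain ⟨⟨b, hb⟩, hbdd⟩ := hm'
    have hne : ({k | ∃ b, g b ≤ m ∧ f b = k} : Set ℕ).Nonempty := ⟨f b, b, hb, rfl⟩
    rw [hvalU m hm]
    exact Nat.sSup_mem hne hbdd
  have hUub : ∀ m ∈ domU, ∀ b, g b ≤ m → f b ≤ valU m := by
    intro m hm b hb
    have hm' := hm
    rw [hdomU] at hm'
    rw [hvalU m hm]
    exact le_csSup hm'.2 ⟨b, hb, rfl⟩
  have hLmem : ∀ m ∈ domL, ∃ b, m ≤ f b ∧ g b = valL m := by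
    intro m hm
    have hm' := hm
    rw [hdomL] at hm'
    obtain ⟨b, hb⟩ := hm'
    have hne : ({k | ∃ b, m ≤ f b ∧ g b = k} : Set ℕ).Nonempty := ⟨g b, b, hb, rfl⟩
    rw [hvalL m hm]
    exact Nat.sInf_mem hne
  have hLlb : ∀ m ∈ domL, ∀ b, m ≤ f b → valL m ≤ g b := by
    intro m hm b hb
    rw [hvalL m hm]
    exact Nat.sInf_le ⟨b, hb, rfl⟩
  have hInfBdd : domU.Infinite → ∀ m, BddAbove {k | ∃ b, g b ≤ m ∧ f b = k} := by
    intro hinf m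
    by_contra hnb
    apply hinf
    apply (Set.finite_Iio m).subset
    intro m' hm'
    rw [hdomU] at hm'
    by_contra hlt
    simp only [Set.mem_Iio, not_lt] at hlt
    exact hnb (BddAbove.mono (fun k hk => by
      obtain ⟨b, hb, hfb⟩ := hk
      exact ⟨b, hb.trans hlt, hfb⟩) hm'.2)
  have hCofin : domU.Infinite → ∀ m, g b0 ≤ m → m ∈ domU := by
    intro hinf m hm
    rw [hdomU]
    exact ⟨⟨b0, hm⟩, hInfBdd hinf m⟩
  have hLuniv : (∀ n, ∃ b, n ≤ f b) → domL = Set.univ := by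
    intro h; rw [hdomL]; exact Set.eq_univ_of_forall h
  cases t with
  | A =>
    obtain ⟨hinf, C, hC⟩ := ht
    show domL.Finite
    apply (Set.finite_Iic C).subset
    intro m hm
    rw [hdomL] at hm
    obtain ⟨b, hb⟩ := hm
    have hbU : g b ∈ domU := by
      rw [hdomU]; exact ⟨⟨b, le_refl _⟩, hInfBdd hinf _⟩
    have := hUub _ hbU b (le_refl _)
    exact Set.mem_Iic.2 (hb.trans (this.trans (hC _ hbU)))
  | E =>
    have ht' : domU.Finite := ht
    have hex : ∃ m0, ¬ BddAbove {k | ∃ b, g b ≤ m0 ∧ f b = k} := by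
      by_contra h
      push_neg at h
      refine ((Set.Ici_infinite (g b0)).mono ?_) ht'
      intro m hm
      rw [hdomU]
      exact ⟨⟨b0, hm⟩, h m⟩
    obtain ⟨m0, hm0⟩ := hex
    rw [not_bddAbove_iff] at hm0
    have hun : ∀ n, ∃ b, g b ≤ m0 ∧ n < f b := by
      intro n
      obtain ⟨y, ⟨b, hb, rfl⟩, hy⟩ := hm0 n
      exact ⟨b, hb, hy⟩
    constructor
    · rw [hLuniv (fun n => (hun n).elim fun b hb => ⟨b, hb.2.le⟩)]
      exact Set.infinite_univ
    · refine ⟨m0, fun m hm => ?_⟩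
      obtain ⟨b, hb, hn⟩ := hun m
      exact (hLlb m hm b hn.le).trans hb
  | B =>
    obtain ⟨hinf, hplusfin, hnbdd⟩ := ht
    have hun : ∀ n, ∃ b, n ≤ f b := by
      intro n
      rw [bddOn] at hnbdd
      push_neg at hnbdd
      obtain ⟨m, hm, hv⟩ := hnbdd n
      obtain ⟨b, _, hfb⟩ := hUmem m hm
      exact ⟨b, by omega⟩
    have hLu := hLuniv hun
    constructor
    · rw [hLu]; exact Set.infinite_univ
    · apply (hplusfin.union (Set.finite_Iio (g b0))).subset
      intro m hm
      obtain ⟨hmL, hml⟩ := hm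
      by_cases hge : g b0 ≤ m
      · left
        have hmU := hCofin hinf m hge
        obtain ⟨b, hfb, hgb⟩ := hLmem m hmL
        exact ⟨hmU, le_trans hfb (hUub m hmU b (by omega))⟩
      · right; exact Set.mem_Iio.2 (by omega)
  | D =>
    obtain ⟨hinf, hminusfin⟩ := ht
    obtain ⟨N0, hN0⟩ := hminusfin.bddAbove
    set N := max (N0 + 1) (g b0) with hNdef
    have key : ∀ m, N ≤ m → ∃ b, g b ≤ m ∧ m < f b := by
      intro m hm
      have hmU : m ∈ domU := hCofin hinf m (le_trans (le_max_right _ _) hm)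
      have hnm : ¬ (valU m ≤ m) := by
        intro hle
        have hmem : m ∈ domMinus domU valU := ⟨hmU, hle⟩
        have := hN0 hmem
        have := le_max_left (N0 + 1) (g b0)
        omega
      obtain ⟨b, hgb, hfb⟩ := hUmem m hmU
      exact ⟨b, hgb, by omega⟩
    have hun : ∀ n, ∃ b, n ≤ f b := by
      intro n
      obtain ⟨b, _, hfb⟩ := key (max n N) (le_max_right _ _)
      have := le_max_left n N
      exact ⟨b, by omega⟩
    have hLu := hLuniv hun
    refine ⟨by rw [hLu]; exact Set.infinite_univ, ?_, ?_⟩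
    · apply (Set.finite_Iic N).subset
      intro m hm
      obtain ⟨hmL, hml⟩ := hm
      by_contra h
      simp only [Set.mem_Iic, not_le] at h
      obtain ⟨b, hgb, hfb⟩ := key (m - 1) (by omega)
      have := hLlb m hmL b (by omega)
      omega
    · rintro ⟨C, hC⟩
      obtain ⟨D, hD⟩ := hInfBdd hinf C
      have hmemL : (D + 1) ∈ domL := by rw [hLu]; trivial
      obtain ⟨b, hfb, hgb⟩ := hLmem (D + 1) hmemL
      have h1 : valL (D + 1) ≤ C := hC _ hmemL
      have hgC : g b ≤ C := by omega
      have h2 : f b ≤ D := hD ⟨b, hgC, rfl⟩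
      omega
  | C =>
    obtain ⟨hplusinf, hminusinf⟩ := ht
    have hinf : domU.Infinite := hplusinf.mono (fun m hm => hm.1)
    have hun : ∀ n, ∃ b, n ≤ f b := by
      intro n
      obtain ⟨m, hm, hnm⟩ := hplusinf.exists_gt n
      obtain ⟨hmU, hmv⟩ := hm
      obtain ⟨b, _, hfb⟩ := hUmem m hmU
      exact ⟨b, by omega⟩
    have hLu := hLuniv hun
    constructor
    · have himg : ((fun m => m + 1) '' domMinus domU valU).Infinite :=
        hminusinf.image (Set.injOn_of_injective (fun a b h => by omega))
      apply himg.mono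
      rintro k ⟨m, ⟨hmU, hmv⟩, rfl⟩
      show (m + 1) ∈ domPlus domL valL
      have hmemL : (m + 1) ∈ domL := by rw [hLu]; trivial
      refine ⟨hmemL, ?_⟩
      obtain ⟨b, hfb, hgb⟩ := hLmem (m + 1) hmemL
      have hnle : ¬ g b ≤ m := fun h => by
        have := hUub m hmU b h
        omega
      omega
    · apply hplusinf.mono
      rintro m ⟨hmU, hmv⟩
      obtain ⟨b, hgb, hfb⟩ := hUmem m hmU
      have hmemL : m ∈ domL := by rw [hLu]; trivial
      refine ⟨hmemL, ?_⟩
      have := hLlb m hmemL b (by omega)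
      omega
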